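/- Let Y and D be random variables with D taking values in {0, 1, .., N̄} and Var(D) > 0. Define α₁ = Cov(Y, D)/Var(D). Then α₁ = ∑_{d=1}^{N̄} ω(d)·(E[Y|D=d] − E[Y|D=d-1]), where ω(d) = (E[D | D ≥ d] − E[D])·P(D ≥ d) / Var(D). Moreover ω(d) ≥ 0 for all d and ∑_{d=1}^{N̄} ω(d) = 1. -/

import Mathlib

open Finset

/- Probability of an event, conditional probability `P(A|B)`, and conditional
expectation `E[Y|A]` under a mass function `p` on a finite sample space. -/

open Classical in
noncomputable def Pr {Ω : Type*} [Fintype Ω] (p : Ω → ℝ) (A : Ω → Prop) : ℝ :=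
  ∑ ω, if A ω then p ω else 0

noncomputable def cPr {Ω : Type*} [Fintype Ω] (p : Ω → ℝ) (A B : Ω → Prop) : ℝ :=
  Pr p (fun ω => A ω ∧ B ω) / Pr p B

open Classical in
noncomputable def cexp {Ω : Type*} [Fintype Ω] (p : Ω → ℝ) (Y : Ω → ℝ) (A : Ω → Prop) : ℝ :=
  (∑ ω, if A ω then p ω * Y ω else 0) / Pr p A

/-- Expectation under the mass function `p`. -/
noncomputable def Ex {Ω : Type*} [Fintype Ω] (p : Ω → ℝ) (X : Ω → ℝ) : ℝ :=
  ∑ ω, p ω * X ω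

/-- Discrete Yitzhaki decomposition: for `D` supported on `{0,…,N}` with positive
variance, the population regression slope `α₁ = Cov(Y,D)/Var(D)` equals
`∑_{d=1}^{N} ω(d)·(E[Y|D=d] − E[Y|D=d-1])` with
`ω(d) = (E[D|D ≥ d] − E[D])·P(D ≥ d)/Var(D)`; moreover the weights are nonnegative
and sum to one. -/
theorem yitzhaki_decomposition
    {Ω : Type*} [Fintype Ω]
    (p : Ω → ℝ) (hp0 : ∀ ω, 0 ≤ p ω) (hp1 : ∑ ω, p ω = 1)
    (Y : Ω → ℝ) (D : Ω → ℕ) (N : ℕ) (hDN : ∀ ω, D ω ≤ N)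
    (hpos : ∀ d ≤ N, 0 < Pr p (fun ω => D ω = d))
    (Var : ℝ)
    (hVarDef : Var = Ex p (fun ω => ((D ω : ℝ)) ^ 2) - (Ex p (fun ω => (D ω : ℝ))) ^ 2)
    (hVar : 0 < Var)
    (α₁ : ℝ)
    (hα : α₁ = (Ex p (fun ω => Y ω * (D ω : ℝ))
        - Ex p Y * Ex p (fun ω => (D ω : ℝ))) / Var)
    (ωreg : ℕ → ℝ)
    (hωdef : ∀ d, ωreg d =
      (cexp p (fun ω => (D ω : ℝ)) (fun ω => d ≤ D ω)
          - Ex p (fun ω => (D ω : ℝ))) * Pr p (fun ω => d ≤ D ω) / Var) :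
    α₁ = ∑ d ∈ Finset.Icc 1 N,
          ωreg d * (cexp p Y (fun ω => D ω = d) - cexp p Y (fun ω => D ω = d - 1)) ∧
    (∀ d ∈ Finset.Icc 1 N, 0 ≤ ωreg d) ∧
    ∑ d ∈ Finset.Icc 1 N, ωreg d = 1 := by
  classical
  have hVne : Var ≠ 0 := ne_of_gt hVar
  set μ : ℝ := Ex p (fun ω => (D ω : ℝ)) with hμ
  have hμ' : μ = ∑ ω, p ω * (D ω : ℝ) := hμ
  set T : ℕ → ℝ := fun d => ∑ ω, if d ≤ D ω then p ω * ((D ω : ℝ) - μ) else 0 with hTdef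
  set A : ℕ → ℝ := fun d => ∑ ω, if D ω = d then p ω * Y ω else 0 with hAdef
  set π : ℕ → ℝ := fun d => ∑ ω, if D ω = d then p ω else 0 with hπdef
  set m : ℕ → ℝ := fun d => cexp p Y (fun ω => D ω = d) with hmdef
  have hPrEq : ∀ (d : ℕ), Pr p (fun ω => D ω = d) = π d := by
    intro d
    simp only [Pr, hπdef]
    exact Finset.sum_congr rfl fun ω _ => by congr
  have hPrGe : ∀ (d : ℕ), Pr p (fun ω => d ≤ D ω) = ∑ ω, if d ≤ D ω then p ω else 0 := by
    intro d
    simp only [Pr]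
    exact Finset.sum_congr rfl fun ω _ => by congr
  have hπpos : ∀ d ≤ N, 0 < π d := fun d hd => by
    rw [← hPrEq]; exact hpos d hd
  have hPrGepos : ∀ d ≤ N, 0 < Pr p (fun ω => d ≤ D ω) := by
    intro d hd
    rw [hPrGe]
    calc (0:ℝ) < π N := hπpos N le_rfl
    _ ≤ ∑ ω, if d ≤ D ω then p ω else 0 := by
        apply Finset.sum_le_sum
        intro ω _
        by_cases h1 : D ω = N
        · rw [if_pos h1, if_pos (by omega)]
        · rw [if_neg h1]
          split
          · exact hp0 ω
          · exact le_rfl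
  have hmA : ∀ d ≤ N, m d * π d = A d := by
    intro d hd
    have hmd : m d = A d / π d := by
      simp only [hmdef, cexp, hPrEq, hAdef]
      congr 1
      exact Finset.sum_congr rfl fun ω _ => by congr
    rw [hmd, div_mul_cancel₀ _ (ne_of_gt (hπpos d hd))]
  have hωT : ∀ d ≤ N, ωreg d = T d / Var := by
    intro d hd
    rw [hωdef d]
    congr 1
    have hPne : Pr p (fun ω => d ≤ D ω) ≠ 0 := ne_of_gt (hPrGepos d hd)
    have hce : cexp p (fun ω => (D ω : ℝ)) (fun ω => d ≤ D ω) * Pr p (fun ω => d ≤ D ω)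
        = ∑ ω, if d ≤ D ω then p ω * (D ω : ℝ) else 0 := by
      simp only [cexp]
      rw [div_mul_cancel₀ _ hPne]
    rw [sub_mul, hce, hPrGe, Finset.mul_sum, hTdef, ← Finset.sum_sub_distrib]
    refine Finset.sum_congr rfl fun ω _ => ?_
    split <;> ring
  have hze : ∑ ω, p ω * ((D ω : ℝ) - μ) = 0 := by
    have h : ∑ ω, p ω * ((D ω : ℝ) - μ) = (∑ ω, p ω * (D ω : ℝ)) - (∑ ω, p ω) * μ := by
      rw [Finset.sum_mul, ← Finset.sum_sub_distrib]
      exact Finset.sum_congr rfl fun ω _ => by ring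
    rw [h, hp1, ← hμ']
    ring
  have hT0 : T 0 = 0 := by
    have h : T 0 = ∑ ω, p ω * ((D ω : ℝ) - μ) := by
      simp only [hTdef]
      exact Finset.sum_congr rfl fun ω _ => if_pos (Nat.zero_le _)
    rw [h, hze]
  have hTN1 : T (N + 1) = 0 := by
    simp only [hTdef]
    exact Finset.sum_eq_zero fun ω _ => if_neg (by have := hDN ω; omega)
  have hTdiff : ∀ i, T i - T (i + 1) = ((i : ℝ) - μ) * π i := by
    intro i
    simp only [hTdef, hπdef, Finset.mul_sum, ← Finset.sum_sub_distrib]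
    refine Finset.sum_congr rfl fun ω _ => ?_
    rcases lt_trichotomy (D ω) i with h | h | h
    · rw [if_neg (by omega), if_neg (by omega), if_neg (by omega)]; ring
    · rw [if_pos (by omega), if_neg (by omega), if_pos (by omega), h]; ring
    · rw [if_pos (by omega), if_pos (by omega), if_neg (by omega)]; ring
  have hCov : Ex p (fun ω => Y ω * (D ω : ℝ)) - Ex p Y * μ
      = ∑ ω, p ω * Y ω * ((D ω : ℝ) - μ) := by
    simp only [Ex]
    rw [Finset.sum_mul, ← Finset.sum_sub_distrib]
    exact Finset.sum_congr rfl fun ω _ => by ring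
  have hIcc : ∀ (f : ℕ → ℝ), ∑ d ∈ Finset.Icc 1 N, f d = ∑ i ∈ Finset.range N, f (i + 1) := by
    intro f
    rw [← Finset.Ico_add_one_right_eq_Icc, Finset.sum_Ico_eq_sum_range]
    exact Finset.sum_congr (by norm_num) fun i _ => by rw [Nat.add_comm]
  have hAbel : ∑ d ∈ Finset.Icc 1 N, T d * (m d - m (d - 1))
      = ∑ i ∈ Finset.range (N + 1), (T i - T (i + 1)) * m i := by
    rw [hIcc]
    have h1 : ∑ i ∈ Finset.range N, T (i + 1) * (m (i + 1) - m ((i + 1) - 1))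
        = ∑ i ∈ Finset.range N, (T (i + 1) * m (i + 1) - T (i + 1) * m i) := by
      refine Finset.sum_congr rfl fun i _ => ?_
      rw [Nat.add_sub_cancel]; ring
    rw [h1, Finset.sum_sub_distrib]
    have h2 : ∑ i ∈ Finset.range (N + 1), T i * m i
        = ∑ i ∈ Finset.range N, T (i + 1) * m (i + 1) := by
      rw [Finset.sum_range_succ', hT0]; ring
    have h3 : ∑ i ∈ Finset.range (N + 1), T (i + 1) * m i
        = ∑ i ∈ Finset.range N, T (i + 1) * m i := by
      rw [Finset.sum_range_succ, hTN1]; ring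
    rw [← h2, ← h3, ← Finset.sum_sub_distrib]
    exact Finset.sum_congr rfl fun i _ => by ring
  have hmain : ∑ d ∈ Finset.Icc 1 N, T d * (m d - m (d - 1))
      = Ex p (fun ω => Y ω * (D ω : ℝ)) - Ex p Y * μ := by
    rw [hAbel, hCov]
    have h4 : ∀ i ∈ Finset.range (N + 1), (T i - T (i + 1)) * m i
        = ∑ ω, if D ω = i then ((i : ℝ) - μ) * (p ω * Y ω) else 0 := by
      intro i hi
      rw [Finset.mem_range] at hi
      have hi' : i ≤ N := by omega
      rw [hTdiff i, show ((i : ℝ) - μ) * π i * m i = ((i : ℝ) - μ) * A i from by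
        rw [← hmA i hi']; ring]
      simp only [hAdef, Finset.mul_sum]
      refine Finset.sum_congr rfl fun ω _ => ?_
      split <;> ring
    rw [Finset.sum_congr rfl h4, Finset.sum_comm]
    refine Finset.sum_congr rfl fun ω _ => ?_
    rw [Finset.sum_ite_eq (Finset.range (N + 1)) (D ω) (fun i => ((i : ℝ) - μ) * (p ω * Y ω)),
      if_pos (Finset.mem_range.mpr (by have := hDN ω; omega))]
    ring
  have hsumT : ∑ d ∈ Finset.Icc 1 N, T d = Var := by
    have hswap : ∑ d ∈ Finset.Icc 1 N, T d
        = ∑ ω, ∑ d ∈ Finset.Icc 1 N, (if d ≤ D ω then p ω * ((D ω : ℝ) - μ) else 0) := by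
      simp only [hTdef]
      exact Finset.sum_comm
    rw [hswap]
    have hinner : ∀ ω, ∑ d ∈ Finset.Icc 1 N, (if d ≤ D ω then p ω * ((D ω : ℝ) - μ) else 0)
        = (D ω : ℝ) * (p ω * ((D ω : ℝ) - μ)) := by
      intro ω
      have hf : (Finset.Icc 1 N).filter (fun d => d ≤ D ω) = Finset.Icc 1 (D ω) := by
        ext x
        simp only [Finset.mem_filter, Finset.mem_Icc]
        have := hDN ω
        omega
      rw [← Finset.sum_filter, hf, Finset.sum_const, Nat.card_Icc, Nat.add_sub_cancel,
        nsmul_eq_mul]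
    rw [Finset.sum_congr rfl fun ω _ => hinner ω]
    have h5 : ∑ ω, (D ω : ℝ) * (p ω * ((D ω : ℝ) - μ))
        = (∑ ω, p ω * (D ω : ℝ) ^ 2) - (∑ ω, p ω * (D ω : ℝ)) * μ := by
      rw [Finset.sum_mul, ← Finset.sum_sub_distrib]
      exact Finset.sum_congr rfl fun ω _ => by ring
    rw [h5, ← hμ', hVarDef]
    simp only [Ex]
    ring
  refine ⟨?_, ?_, ?_⟩
  · rw [hα, ← hmain, Finset.sum_div]
    refine Finset.sum_congr rfl fun d hd => ?_
    rw [hωT d (Finset.mem_Icc.mp hd).2]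
    show T d * (m d - m (d - 1)) / Var = T d / Var * (m d - m (d - 1))
    ring
  · intro d hd
    obtain ⟨hd1, hd2⟩ := Finset.mem_Icc.mp hd
    rw [hωT d hd2]
    apply div_nonneg _ hVar.le
    rcases le_or_gt (d : ℝ) μ with hcase | hcase
    · have hsplit : T d + (∑ ω, if D ω < d then p ω * ((D ω : ℝ) - μ) else 0)
          = ∑ ω, p ω * ((D ω : ℝ) - μ) := by
        simp only [hTdef, ← Finset.sum_add_distrib]
        refine Finset.sum_congr rfl fun ω _ => ?_
        rcases le_or_gt d (D ω) with h | h
        · rw [if_pos h, if_neg (by omega)]; ring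
        · rw [if_neg (by omega), if_pos h]; ring
      have hneg : ∑ ω, (if D ω < d then p ω * ((D ω : ℝ) - μ) else 0) ≤ 0 := by
        apply Finset.sum_nonpos
        intro ω _
        split
        · next h =>
            apply mul_nonpos_of_nonneg_of_nonpos (hp0 ω)
            have : (D ω : ℝ) < (d : ℝ) := by exact_mod_cast h
            linarith
        · exact le_rfl
      rw [hze] at hsplit
      linarith
    · simp only [hTdef]
      apply Finset.sum_nonneg
      intro ω _
      split
      · next h =>
          apply mul_nonneg (hp0 ω)
          have : (d : ℝ) ≤ (D ω : ℝ) := by exact_mod_cast h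
          linarith
      · exact le_rfl
  · rw [Finset.sum_congr rfl (fun d hd => hωT d (Finset.mem_Icc.mp hd).2), ← Finset.sum_div,
      hsumT, div_self hVne]
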